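/- Let S ⊂ ℝ² be a compact connected set and let B(x,r₁) ⊂ B(x,r₂) be concentric balls. If S intersects the circle ∂B(x,ρ) in at least 2 points for every ρ ∈ [r₁, r₂], then H¹(S ∩ (B(x,r₂) \ B(x,r₁))) ≥ 2(r₂ - r₁). -/

import Mathlib

open Real Metric MeasureTheory
open scoped ENNReal NNReal

/-- Co-area estimate: if a compact connected planar set meets every circle of
radius `ρ ∈ [r₁, r₂]` about `x` in at least two points, then its `H¹` measure
inside the annulus is at least `2 (r₂ - r₁)`. -/
theorem stmt_9 (S : Set (EuclideanSpace ℝ (Fin 2))) (hS : IsCompact S)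
    (hconn : IsConnected S) (x : EuclideanSpace ℝ (Fin 2)) (r₁ r₂ : ℝ)
    (hr : r₁ ≤ r₂)
    (h2 : ∀ ρ ∈ Set.Icc r₁ r₂, ∃ p q, p ≠ q ∧
      p ∈ S ∩ Metric.sphere x ρ ∧ q ∈ S ∩ Metric.sphere x ρ) :
    ENNReal.ofReal (2 * (r₂ - r₁)) ≤
      μH[1] (S ∩ (Metric.closedBall x r₂ \ Metric.ball x r₁)) := by
  classical
  set A : Set (EuclideanSpace ℝ (Fin 2)) :=
    S ∩ (Metric.closedBall x r₂ \ Metric.ball x r₁) with hAdef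
  have hAcomp : IsCompact A := hS.inter_right (Metric.isClosed_closedBall.sdiff isOpen_ball)
  set f : EuclideanSpace ℝ (Fin 2) → ℝ := fun p => dist p x with hfdef
  have hfLip : LipschitzWith 1 f := LipschitzWith.dist_left x
  have hfA : ∀ p ∈ A, f p ∈ Set.Icc r₁ r₂ := by
    rintro p ⟨hpS, hp2, hp1⟩
    exact ⟨le_of_not_gt fun h => hp1 (mem_ball.2 h), mem_closedBall.1 hp2⟩
  have hsphA : ∀ ρ ∈ Set.Icc r₁ r₂, ∀ p ∈ S ∩ Metric.sphere x ρ, p ∈ A := by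
    rintro ρ ⟨ha, hb⟩ p ⟨hpS, hps⟩
    have hd : dist p x = ρ := mem_sphere.1 hps
    exact ⟨hpS, mem_closedBall.2 (hd ▸ hb),
      fun hball => absurd (mem_ball.1 hball) (by rw [hd]; exact not_lt.2 ha)⟩
  set K : ℕ → Set (EuclideanSpace ℝ (Fin 2) × EuclideanSpace ℝ (Fin 2)) := fun k =>
    (A ×ˢ A) ∩ {pq | dist pq.1 x = dist pq.2 x ∧ 1 / (k + 1 : ℝ) ≤ dist pq.1 pq.2} with hKdef
  have hKcomp : ∀ k, IsCompact (K k) := by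
    intro k
    refine (hAcomp.prod hAcomp).inter_right ?_
    exact (isClosed_eq (continuous_fst.dist continuous_const)
        (continuous_snd.dist continuous_const)).inter
      (isClosed_le continuous_const (continuous_fst.dist continuous_snd))
  set G : ℕ → Set ℝ := fun k => (fun pq => f pq.1) '' K k with hGdef
  have hGcomp : ∀ k, IsCompact (G k) := fun k => (hKcomp k).image (continuous_fst.dist continuous_const)
  have hGmeas : ∀ k, MeasurableSet (G k) := fun k => (hGcomp k).isClosed.measurableSet
  have hGsub : ∀ k, G k ⊆ Set.Icc r₁ r₂ := by
    rintro k y ⟨⟨p, q⟩, ⟨⟨hpA, hqA⟩, -⟩, rfl⟩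
    exact hfA p hpA
  -- key per-k estimate
  have key : ∀ k, ENNReal.ofReal (r₂ - r₁) + volume (G k) ≤ μH[1] A := by
    intro k
    set δ : ℝ := 1 / (k + 1 : ℝ) with hδdef
    have hδpos : (0 : ℝ) < δ := by positivity
    have hδ0 : ENNReal.ofReal δ ≠ 0 := by
      simp [ENNReal.ofReal_eq_zero, not_le, hδpos]
    rw [MeasureTheory.Measure.hausdorffMeasure_apply]
    refine le_iSup₂_of_le (ENNReal.ofReal δ / 2) (ENNReal.half_pos hδ0) ?_
    refine le_iInf fun t => le_iInf fun hcov => le_iInf fun hdiam => ?_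
    set V : ℕ → Set ℝ := fun n => f '' (t n ∩ A) with hVdef
    have hVsub : ∀ n, V n ⊆ Set.Icc r₁ r₂ := by
      rintro n y ⟨p, ⟨-, hpA⟩, rfl⟩; exact hfA p hpA
    have hVbdd : ∀ n, Bornology.IsBounded (V n) := fun n =>
      (Metric.isBounded_Icc (a:=r₁) (b:=r₂)).subset (hVsub n)
    set J : ℕ → Set ℝ := fun n =>
      if (V n).Nonempty then Set.Icc (sInf (V n)) (sSup (V n)) else ∅ with hJdef
    have hVJ : ∀ n, V n ⊆ J n := by
      intro n y hy
      have hne : (V n).Nonempty := ⟨y, hy⟩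
      simp only [hJdef, if_pos hne]
      exact ⟨csInf_le (hVbdd n).bddBelow hy, le_csSup (hVbdd n).bddAbove hy⟩
    have hJmeas : ∀ n, MeasurableSet (J n) := by
      intro n
      by_cases hne : (V n).Nonempty <;> simp [hJdef, hne, measurableSet_Icc]
    have hJvol : ∀ n, volume (J n) ≤
        ⨆ _ : (t n).Nonempty, EMetric.diam (t n) ^ (1 : ℝ) := by
      intro n
      by_cases hne : (V n).Nonempty
      · obtain ⟨y, p, ⟨hpt, hpA⟩, rfl⟩ := hne
        have htne : (t n).Nonempty := ⟨p, hpt⟩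
        have hVne : (V n).Nonempty := ⟨f p, p, ⟨hpt, hpA⟩, rfl⟩
        simp only [hJdef, if_pos hVne, Real.volume_Icc]
        have h1 : ENNReal.ofReal (sSup (V n) - sInf (V n)) = EMetric.diam (V n) :=
          (Real.ediam_eq (hVbdd n)).symm
        have h2' : EMetric.diam (V n) ≤ EMetric.diam (t n ∩ A) := by
          have := hfLip.ediam_image_le (t n ∩ A); simp at this; exact this
        have h3 : EMetric.diam (t n ∩ A) ≤ EMetric.diam (t n) :=
          EMetric.diam_mono Set.inter_subset_left
        rw [h1]
        refine le_trans (le_trans h2' h3) ?_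
        simp [htne]
      · simp [hJdef, hne]
    -- pointwise counting inequality
    have hpt : ∀ y : ℝ, (Set.Icc r₁ r₂).indicator (1 : ℝ → ℝ≥0∞) y
        + (G k).indicator (1 : ℝ → ℝ≥0∞) y
        ≤ ∑' n, (J n).indicator (1 : ℝ → ℝ≥0∞) y := by
      intro y
      by_cases hyI : y ∈ Set.Icc r₁ r₂
      · by_cases hyG : y ∈ G k
        · obtain ⟨⟨p, q⟩, ⟨⟨hpA, hqA⟩, heq, hge⟩, rfl⟩ := hyG
          obtain ⟨n, hpn⟩ := Set.mem_iUnion.1 (hcov hpA)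
          obtain ⟨m, hqm⟩ := Set.mem_iUnion.1 (hcov hqA)
          have hnm : n ≠ m := by
            rintro rfl
            have h1 : ENNReal.ofReal δ ≤ edist p q := by
              rw [edist_dist]
              exact ENNReal.ofReal_le_ofReal hge
            have h2' : edist p q ≤ ENNReal.ofReal δ / 2 :=
              le_trans (EMetric.edist_le_diam_of_mem hpn hqm) (hdiam n)
            have : ENNReal.ofReal δ / 2 < ENNReal.ofReal δ :=
              ENNReal.half_lt_self hδ0 ENNReal.ofReal_ne_top
            exact absurd (le_trans h1 h2') (not_le.2 this)
          have hyn : f p ∈ J n := hVJ n ⟨p, ⟨hpn, hpA⟩, rfl⟩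
          have hym : f p ∈ J m := by
            have : f q ∈ J m := hVJ m ⟨q, ⟨hqm, hqA⟩, rfl⟩
            simpa only [hfdef, heq] using this
          have hG' : f p ∈ G k := ⟨(p, q), ⟨⟨hpA, hqA⟩, heq, hge⟩, rfl⟩
          calc (Set.Icc r₁ r₂).indicator (1 : ℝ → ℝ≥0∞) (f p)
              + (G k).indicator (1 : ℝ → ℝ≥0∞) (f p)
              = 1 + 1 := by rw [Set.indicator_of_mem hyI, Set.indicator_of_mem hG']; rfl
            _ = ∑ i ∈ ({n, m} : Finset ℕ), (J i).indicator (1 : ℝ → ℝ≥0∞) (f p) := by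
                rw [Finset.sum_pair hnm, Set.indicator_of_mem hyn, Set.indicator_of_mem hym]; rfl
            _ ≤ ∑' i, (J i).indicator (1 : ℝ → ℝ≥0∞) (f p) :=
                ENNReal.sum_le_tsum _
        · obtain ⟨p, q, hpq, hp, hq⟩ := h2 y hyI
          have hpA : p ∈ A := hsphA y hyI p hp
          obtain ⟨n, hpn⟩ := Set.mem_iUnion.1 (hcov hpA)
          have hfp : f p = y := mem_sphere.1 hp.2
          have hyn : y ∈ J n := hfp ▸ hVJ n ⟨p, ⟨hpn, hpA⟩, rfl⟩
          calc (Set.Icc r₁ r₂).indicator (1 : ℝ → ℝ≥0∞) y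
              + (G k).indicator (1 : ℝ → ℝ≥0∞) y
              = 1 := by rw [Set.indicator_of_mem hyI, Set.indicator_of_notMem hyG, add_zero]; rfl
            _ = (J n).indicator (1 : ℝ → ℝ≥0∞) y := (Set.indicator_of_mem hyn (1 : ℝ → ℝ≥0∞)).symm
            _ ≤ ∑' i, (J i).indicator (1 : ℝ → ℝ≥0∞) y := ENNReal.le_tsum n
      · have hyG : y ∉ G k := fun h => hyI (hGsub k h)
        simp [Set.indicator_of_notMem, hyI, hyG]
    calc ENNReal.ofReal (r₂ - r₁) + volume (G k)
        = volume (Set.Icc r₁ r₂) + volume (G k) := by rw [Real.volume_Icc]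
      _ = (∫⁻ y, (Set.Icc r₁ r₂).indicator (1 : ℝ → ℝ≥0∞) y)
          + ∫⁻ y, (G k).indicator (1 : ℝ → ℝ≥0∞) y := by
          rw [lintegral_indicator_one measurableSet_Icc, lintegral_indicator_one (hGmeas k)]
      _ = ∫⁻ y, ((Set.Icc r₁ r₂).indicator (1 : ℝ → ℝ≥0∞) y
          + (G k).indicator (1 : ℝ → ℝ≥0∞) y) := by
          exact (lintegral_add_left (f := (Set.Icc r₁ r₂).indicator 1)
            (measurable_one.indicator measurableSet_Icc) _).symm
      _ ≤ ∫⁻ y, ∑' n, (J n).indicator (1 : ℝ → ℝ≥0∞) y := lintegral_mono hpt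
      _ = ∑' n, volume (J n) := by
          rw [lintegral_tsum (f := fun n => (J n).indicator 1)
            fun n => (measurable_one.indicator (hJmeas n)).aemeasurable]
          exact tsum_congr fun n => lintegral_indicator_one (hJmeas n)
      _ ≤ ∑' n, ⨆ _ : (t n).Nonempty, EMetric.diam (t n) ^ (1 : ℝ) :=
          ENNReal.tsum_le_tsum hJvol
  -- the union of the G k covers [r₁, r₂]
  have hcover : Set.Icc r₁ r₂ ⊆ ⋃ k, G k := by
    intro y hy
    obtain ⟨p, q, hpq, hp, hq⟩ := h2 y hy
    have hpA : p ∈ A := hsphA y hy p hp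
    have hqA : q ∈ A := hsphA y hy q hq
    have hd : (0 : ℝ) < dist p q := dist_pos.2 hpq
    obtain ⟨k, hk⟩ := exists_nat_one_div_lt hd
    refine Set.mem_iUnion.2 ⟨k, ⟨(p, q), ⟨⟨hpA, hqA⟩, ?_, hk.le⟩, mem_sphere.1 hp.2⟩⟩
    rw [mem_sphere.1 hp.2, mem_sphere.1 hq.2]
  have hmono : Monotone G := by
    intro k l hkl
    refine Set.image_mono ?_
    rintro ⟨p, q⟩ ⟨hA', heq, hge⟩
    refine ⟨hA', heq, le_trans ?_ hge⟩
    have : (k : ℝ) + 1 ≤ (l : ℝ) + 1 := by exact_mod_cast by omega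
    exact one_div_le_one_div_of_le (by positivity) this
  have h1 : ENNReal.ofReal (r₂ - r₁) ≤ ⨆ k, volume (G k) := by
    calc ENNReal.ofReal (r₂ - r₁) = volume (Set.Icc r₁ r₂) := (Real.volume_Icc).symm
      _ ≤ volume (⋃ k, G k) := measure_mono hcover
      _ = ⨆ k, volume (G k) := hmono.directed_le.measure_iUnion
  have h2' : ENNReal.ofReal (2 * (r₂ - r₁))
      = ENNReal.ofReal (r₂ - r₁) + ENNReal.ofReal (r₂ - r₁) := by
    rw [← ENNReal.ofReal_add (by linarith) (by linarith)]; ring_nf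
  calc ENNReal.ofReal (2 * (r₂ - r₁))
      ≤ ENNReal.ofReal (r₂ - r₁) + ⨆ k, volume (G k) := by
        rw [h2']; exact add_le_add_right h1 _
    _ = ⨆ k, (ENNReal.ofReal (r₂ - r₁) + volume (G k)) := ENNReal.add_iSup _
    _ ≤ μH[1] A := iSup_le key
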